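/- Let A ⊆ R^d be (p,δ)-separated with p > 0, and suppose every a ∈ A satisfies |a| ≥ 1. For a_0 ∈ A let φ_{a_0}(x) = ρ(δ^{−1/2}|a_0|^p (x−a_0)), where ρ is a Schwartz function with ρ(0)=1 satisfying |ρ(x)| ≤ C exp(−|x|^{0.9}). Let w(t) = exp((log t)^3). Then for all sufficiently large δ (independent of a_0), Σ_{a ∈ A, a ≠ a_0} |φ_{a_0}(a)| w(|a|^{p^{1/2}}) ≤ (1/4) w(|a_0|^{p^{1/2}}). -/

import Mathlib

open Metric Real Filter MeasureTheory

noncomputable def jb {d : ℕ} (x : EuclideanSpace ℝ (Fin d)) : ℝ := Real.sqrt (1 + ‖x‖ ^ 2)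

/-- The weight `w(t) = exp((log t)³)`. -/
noncomputable def wQE (t : ℝ) : ℝ := Real.exp ((Real.log t) ^ 3)

section Aux

lemma ev_log_pow_le (C : ℝ) {e : ℝ} (he : 0 < e) (j : ℕ) (hj : 0 < j) :
    ∀ᶠ x : ℝ in atTop, C * Real.log x ^ j ≤ x ^ e := by
  have hej : 0 < e / j := div_pos he (by exact_mod_cast hj)
  have h1 := (isLittleO_log_rpow_atTop hej).pow hj
  have h2 := (h1.const_mul_left C).bound one_pos
  filter_upwards [h2, eventually_ge_atTop (1:ℝ)] with x hx hx1
  have hx0 : (0:ℝ) ≤ x := by linarith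
  have hxe : (x ^ (e/j)) ^ j = x ^ e := by
    rw [← Real.rpow_natCast (x ^ (e/j)) j, ← Real.rpow_mul hx0, div_mul_cancel₀]
    exact_mod_cast hj.ne'
  calc C * Real.log x ^ j ≤ ‖C * Real.log x ^ j‖ := le_abs_self _
    _ ≤ 1 * ‖(x ^ (e/j)) ^ j‖ := hx
    _ = (x ^ (e/j)) ^ j := by
        rw [one_mul, Real.norm_eq_abs, abs_of_nonneg (pow_nonneg (Real.rpow_nonneg hx0 _) _)]
    _ = x ^ e := hxe

/-- eventual bound making the shell series summable -/
lemma ev_shell_le (Cc K : ℝ) (hCc : 1 ≤ Cc) (hK : 0 ≤ K) :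
    ∀ᶠ x : ℝ in atTop,
      Cc * (x + 1) ^ K * Real.exp (-(1/2) * x ^ (0.9:ℝ)) ≤ (x ^ (2:ℝ))⁻¹ := by
  filter_upwards [ev_log_pow_le (2*(2*K+3)) (show (0:ℝ) < 0.9 by norm_num) 1 one_pos,
    eventually_ge_atTop (2:ℝ), eventually_ge_atTop Cc] with x hev hx2 hxC
  have hx0 : (0:ℝ) < x := by linarith
  have hx1 : (1:ℝ) ≤ x := by linarith
  have hlx0 : (0:ℝ) ≤ Real.log x := Real.log_nonneg hx1
  have hlogx1 : Real.log (x+1) ≤ 2 * Real.log x := by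
    have h1 : x + 1 ≤ x ^ 2 := by nlinarith
    have := Real.log_le_log (by linarith) h1
    rwa [Real.log_pow, Nat.cast_ofNat] at this
  have hlogC : Real.log Cc ≤ Real.log x := Real.log_le_log (by linarith) hxC
  have hexp : Real.log Cc + K * Real.log (x+1) + 2 * Real.log x ≤ 1/2 * x ^ (0.9:ℝ) := by
    have h2 : K * Real.log (x+1) ≤ K * (2 * Real.log x) :=
      mul_le_mul_of_nonneg_left hlogx1 hK
    have h3 : 2*(2*K+3) * Real.log x ^ 1 ≤ x ^ (0.9:ℝ) := hev
    rw [pow_one] at h3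
    nlinarith [mul_nonneg hK hlx0]
  have hkey : Cc * (x+1) ^ K * x ^ (2:ℝ) ≤ Real.exp (1/2 * x ^ (0.9:ℝ)) := by
    have e1 : Cc * (x+1) ^ K * x ^ (2:ℝ)
        = Real.exp (Real.log Cc + Real.log (x+1) * K + Real.log x * 2) := by
      rw [Real.exp_add, Real.exp_add, Real.exp_log (by positivity),
        ← Real.rpow_def_of_pos (by linarith : (0:ℝ) < x + 1),
        ← Real.rpow_def_of_pos hx0]
    rw [e1]
    apply Real.exp_le_exp.mpr
    linarith [hexp]
  have hB : (0:ℝ) < x ^ (2:ℝ) := Real.rpow_pos_of_pos hx0 _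
  rw [show (-(1/2) * x ^ (0.9:ℝ)) = -(1/2 * x ^ (0.9:ℝ)) by ring, Real.exp_neg,
    mul_inv_le_iff₀ (Real.exp_pos _), inv_mul_eq_div, le_div_iff₀ hB]
  linarith [hkey]

lemma summable_shell (Cc K : ℝ) (hCc : 1 ≤ Cc) (hK : 0 ≤ K) :
    Summable (fun n : ℕ => Cc * ((n:ℝ) + 1) ^ K * Real.exp (-(1/2) * (n:ℝ) ^ (0.9:ℝ))) := by
  apply summable_of_isBigO (Real.summable_nat_rpow_inv.mpr one_lt_two)
  rw [Nat.cofinite_eq_atTop]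
  apply Asymptotics.IsBigO.of_bound 1
  have hev := tendsto_natCast_atTop_atTop.eventually (ev_shell_le Cc K hCc hK)
  filter_upwards [hev, eventually_ge_atTop 1] with n hn hn1
  have hn0 : (0:ℝ) < (n:ℝ) := by exact_mod_cast hn1
  rw [one_mul, Real.norm_eq_abs, Real.norm_eq_abs,
    abs_of_nonneg (by positivity), abs_of_nonneg (by positivity)]
  exact hn

lemma sum_le_tail (g : ℕ → ℝ) (hg : Summable g) (hg0 : ∀ n, 0 ≤ g n) (n₀ : ℕ)
    (s : Finset ℕ) (hs : ∀ n ∈ s, n₀ ≤ n) :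
    ∑ n ∈ s, g n ≤ ∑' k, g (k + n₀) := by
  classical
  have hinj : ∀ x ∈ s, ∀ y ∈ s, x - n₀ = y - n₀ → x = y := by
    intro x hx y hy h
    have := hs x hx; have := hs y hy; omega
  have e1 : ∑ m ∈ s.image (· - n₀), g (m + n₀) = ∑ n ∈ s, g (n - n₀ + n₀) :=
    Finset.sum_image hinj
  have e2 : ∑ n ∈ s, g (n - n₀ + n₀) = ∑ n ∈ s, g n := by
    apply Finset.sum_congr rfl
    intro n hn
    rw [Nat.sub_add_cancel (hs n hn)]
  rw [← e2, ← e1]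
  exact Summable.sum_le_tsum _ (fun i _ => hg0 _) ((summable_nat_add_iff n₀).mpr hg)

lemma card_ball_bound {d : ℕ} (F : Finset (EuclideanSpace ℝ (Fin d)))
    {r t : ℝ} (hr : 0 < r) (ht : 0 ≤ t) (c : EuclideanSpace ℝ (Fin d))
    (hFt : ∀ x ∈ F, dist x c ≤ t)
    (hdisj : (F : Set (EuclideanSpace ℝ (Fin d))).Pairwise fun a b =>
      Disjoint (ball a r) (ball b r)) :
    (F.card : ℝ) * r ^ d ≤ (t + r) ^ d := by
  set μ : Measure (EuclideanSpace ℝ (Fin d)) := volume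
  set ι := μ (ball 0 1) with hι
  have hι0 : ι ≠ 0 := (measure_ball_pos μ 0 one_pos).ne'
  have hιt : ι ≠ ⊤ := measure_ball_lt_top.ne
  have hsub : ∀ x ∈ F, ball x r ⊆ ball c (t + r) := by
    intro x hx y hy
    have := hFt x hx
    have hyx : dist y x < r := mem_ball.mp hy
    have : dist y c < t + r := by
      calc dist y c ≤ dist y x + dist x c := dist_triangle _ _ _
        _ < r + t := by linarith
        _ = t + r := by ring
    exact mem_ball.mpr this
  have hmeas : μ (⋃ x ∈ F, ball x r) = ∑ x ∈ F, μ (ball x r) := by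
    apply measure_biUnion_finset hdisj (fun x _ => measurableSet_ball)
  have hballvol : ∀ x : EuclideanSpace ℝ (Fin d),
      μ (ball x r) = ENNReal.ofReal (r ^ d) * ι := by
    intro x
    rw [hι, Measure.addHaar_ball_of_pos μ x hr, finrank_euclideanSpace_fin]
  have hle : (F.card : ENNReal) * (ENNReal.ofReal (r ^ d) * ι) ≤ ENNReal.ofReal ((t + r) ^ d) * ι := by
    calc (F.card : ENNReal) * (ENNReal.ofReal (r ^ d) * ι)
        = ∑ x ∈ F, μ (ball x r) := by
          rw [Finset.sum_congr rfl (fun x _ => hballvol x), Finset.sum_const, nsmul_eq_mul]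
      _ = μ (⋃ x ∈ F, ball x r) := hmeas.symm
      _ ≤ μ (ball c (t + r)) := measure_mono (Set.iUnion₂_subset hsub)
      _ = ENNReal.ofReal ((t + r) ^ d) * ι := by
          rw [hι, Measure.addHaar_ball_of_pos μ c (by linarith), finrank_euclideanSpace_fin]
  have hle2 : (F.card : ENNReal) * ENNReal.ofReal (r ^ d) ≤ ENNReal.ofReal ((t + r) ^ d) := by
    have h := hle
    rw [← mul_assoc] at h
    exact (ENNReal.mul_le_mul_iff_left hι0 hιt).mp h
  have hof : ENNReal.ofReal ((F.card : ℝ) * r ^ d) ≤ ENNReal.ofReal ((t + r) ^ d) := by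
    rw [ENNReal.ofReal_mul (by positivity)]
    simpa [ENNReal.ofReal_natCast] using hle2
  have := (ENNReal.ofReal_le_ofReal_iff (by positivity)).mp hof
  exact this

set_option maxHeartbeats 1000000 in
/-- Core inequality: weight growth is dominated by half the decay exponent. -/
lemma star_bound (p q δ R N s u X₁ X₂ : ℝ)
    (hp : 0 < p) (hq0 : 0 < q)
    (hδ1 : 1 ≤ δ) (hR : 1 ≤ R) (hN : 1 ≤ N)
    (hs : δ * (Real.sqrt 2 ^ (-p) * R ^ (-p)) ≤ s)
    (htri : N ≤ R + s) (htri2 : s ≤ N + R)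
    (hX₁ : ∀ x ≥ X₁, 12 * q ^ 3 * (3 * Real.sqrt 2 ^ p) ^ (0.45:ℝ) * Real.log (2 * x) ^ 2
      ≤ x ^ (0.45:ℝ))
    (hX₂ : 1 ≤ X₂)
    (hX₂' : ∀ x ≥ X₂, q ^ 3 * Real.log x ^ 3
      ≤ 1 / 2 * (Real.sqrt 2 ^ (-p) / 2) ^ (0.45:ℝ) * x ^ (0.45:ℝ))
    (hG1 : X₁ ≤ (δ * Real.sqrt 2 ^ (-p) / 3) ^ (1 / (p + 1)))
    (hG2 : q ^ 3 * Real.log X₂ ^ 3 ≤ 1 / 2 * (δ ^ ((1:ℝ)/2) * Real.sqrt 2 ^ (-p)) ^ (0.9:ℝ))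
    (hu : u = δ ^ (-(1:ℝ)/2) * R ^ p * s) :
    q ^ 3 * Real.log N ^ 3 ≤ 1 / 2 * u ^ (0.9:ℝ) + q ^ 3 * Real.log R ^ 3 := by
  have hs2pos : (0:ℝ) < Real.sqrt 2 := Real.sqrt_pos.mpr (by norm_num)
  have hδ0 : (0:ℝ) < δ := lt_of_lt_of_le one_pos hδ1
  have hR0 : (0:ℝ) < R := lt_of_lt_of_le one_pos hR
  have hN0 : (0:ℝ) < N := lt_of_lt_of_le one_pos hN
  have hs0 : (0:ℝ) < s := lt_of_lt_of_le (by positivity) hs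
  have hu0 : (0:ℝ) < u := by rw [hu]; positivity
  have hlogR0 : (0:ℝ) ≤ Real.log R := Real.log_nonneg hR
  have hlogN0 : (0:ℝ) ≤ Real.log N := Real.log_nonneg hN
  have hu09 : (0:ℝ) ≤ u ^ (0.9:ℝ) := Real.rpow_nonneg hu0.le _
  by_cases hNR : N ≤ R
  · have h1 : Real.log N ≤ Real.log R := Real.log_le_log hN0 hNR
    have h2 := mul_le_mul_of_nonneg_left (pow_le_pow_left₀ hlogN0 h1 3)
      (by positivity : (0:ℝ) ≤ q ^ 3)
    linarith
  push_neg at hNR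
  have hlogRN : Real.log R ≤ Real.log N := Real.log_le_log hR0 hNR.le
  have hu0le : δ ^ ((1:ℝ)/2) * Real.sqrt 2 ^ (-p) ≤ u := by
    rw [hu]
    calc δ ^ ((1:ℝ)/2) * Real.sqrt 2 ^ (-p)
        = δ ^ (-(1:ℝ)/2) * R ^ p * (δ * (Real.sqrt 2 ^ (-p) * R ^ (-p))) := by
          rw [show δ ^ (-(1:ℝ)/2) * R ^ p * (δ * (Real.sqrt 2 ^ (-p) * R ^ (-p)))
              = (δ ^ (-(1:ℝ)/2) * δ) * (R ^ p * R ^ (-p)) * Real.sqrt 2 ^ (-p) by ring,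
            ← Real.rpow_add hR0, ← Real.rpow_add_one hδ0.ne' (-(1:ℝ)/2)]
          norm_num
      _ ≤ δ ^ (-(1:ℝ)/2) * R ^ p * s := by
          apply mul_le_mul_of_nonneg_left hs (by positivity)
  by_cases hcase : N ≤ 2 * R
  · -- case (i): N ≤ 2R
    have hs3R : s ≤ 3 * R := by linarith
    have hD : δ * Real.sqrt 2 ^ (-p) ≤ 3 * R ^ (p + 1) := by
      have h1 : δ * (Real.sqrt 2 ^ (-p) * R ^ (-p)) ≤ 3 * R := le_trans hs hs3R
      have h2 := mul_le_mul_of_nonneg_right h1 (Real.rpow_nonneg hR0.le p)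
      calc δ * Real.sqrt 2 ^ (-p) = δ * (Real.sqrt 2 ^ (-p) * R ^ (-p)) * R ^ p := by
            rw [show δ * (Real.sqrt 2 ^ (-p) * R ^ (-p)) * R ^ p
                = δ * Real.sqrt 2 ^ (-p) * (R ^ (-p) * R ^ p) by ring, ← Real.rpow_add hR0]
            norm_num
        _ ≤ 3 * R * R ^ p := h2
        _ = 3 * R ^ (p + 1) := by
            rw [Real.rpow_add hR0, Real.rpow_one]; ring
    have hRX₁ : X₁ ≤ R := by
      refine le_trans hG1 ?_
      have h1 : δ * Real.sqrt 2 ^ (-p) / 3 ≤ R ^ (p + 1) := by linarith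
      have h2 : (δ * Real.sqrt 2 ^ (-p) / 3) ^ (1/(p+1)) ≤ (R ^ (p+1)) ^ (1/(p+1)) :=
        Real.rpow_le_rpow (by positivity) h1 (by positivity)
      rwa [← Real.rpow_mul hR0.le, mul_one_div, div_self (by positivity : p + 1 ≠ 0),
        Real.rpow_one] at h2
    have hA₁ := hX₁ R hRX₁
    have hlog2R : Real.log N ≤ Real.log (2 * R) :=
      Real.log_le_log hN0 (by linarith)
    have hlogR2R : Real.log R ≤ Real.log (2 * R) :=
      Real.log_le_log hR0 (by linarith)
    have hlogdiff : Real.log N - Real.log R ≤ s / R := by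
      have h1 : Real.log N - Real.log R = Real.log (N / R) := (Real.log_div hN0.ne' hR0.ne').symm
      rw [h1]
      have h2 : Real.log (N / R) ≤ N / R - 1 := Real.log_le_sub_one_of_pos (by positivity)
      have h3 : N / R - 1 ≤ s / R := by
        rw [div_sub' hR0.ne', div_le_div_iff₀ hR0 hR0]
        nlinarith
      linarith
    have hfac : q ^ 3 * Real.log N ^ 3 - q ^ 3 * Real.log R ^ 3
        ≤ 3 * q ^ 3 * Real.log (2 * R) ^ 2 * (s / R) := by
      have e2 : Real.log N ^ 2 + Real.log N * Real.log R + Real.log R ^ 2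
          ≤ 3 * Real.log (2 * R) ^ 2 := by nlinarith
      have e3 : (0:ℝ) ≤ Real.log N - Real.log R := by linarith
      have e4 : (0:ℝ) ≤ s / R := by positivity
      have e5 : (Real.log N - Real.log R) *
          (Real.log N ^ 2 + Real.log N * Real.log R + Real.log R ^ 2)
          ≤ (s / R) * (3 * Real.log (2*R) ^ 2) := mul_le_mul hlogdiff e2 (by positivity) e4
      have e6 := mul_le_mul_of_nonneg_left e5 (by positivity : (0:ℝ) ≤ q ^ 3)
      nlinarith [e6]
    suffices hkey : 3 * q ^ 3 * Real.log (2 * R) ^ 2 * (s / R) ≤ 1 / 2 * u ^ (0.9:ℝ) by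
      linarith
    have hu9 : u ^ (0.9:ℝ) = (R ^ p) ^ (0.9:ℝ) * s ^ (0.9:ℝ) * (δ ^ (0.45:ℝ))⁻¹ := by
      rw [hu, Real.mul_rpow (by positivity) hs0.le, Real.mul_rpow (by positivity) (by positivity),
        ← Real.rpow_mul hδ0.le, show (-(1:ℝ)/2 * (0.9:ℝ)) = -(0.45:ℝ) by norm_num,
        Real.rpow_neg hδ0.le]
      ring
    have hδ45 : δ ^ (0.45:ℝ) ≤ (3 * Real.sqrt 2 ^ p) ^ (0.45:ℝ) * (R ^ (p+1)) ^ (0.45:ℝ) := by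
      have h1 : δ ≤ 3 * Real.sqrt 2 ^ p * R ^ (p + 1) := by
        have h2 := mul_le_mul_of_nonneg_right hD (Real.rpow_nonneg hs2pos.le p)
        calc δ = δ * Real.sqrt 2 ^ (-p) * Real.sqrt 2 ^ p := by
              rw [mul_assoc, ← Real.rpow_add hs2pos]; norm_num
          _ ≤ 3 * R ^ (p+1) * Real.sqrt 2 ^ p := h2
          _ = 3 * Real.sqrt 2 ^ p * R ^ (p + 1) := by ring
      calc δ ^ (0.45:ℝ) ≤ (3 * Real.sqrt 2 ^ p * R ^ (p+1)) ^ (0.45:ℝ) :=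
            Real.rpow_le_rpow hδ0.le h1 (by norm_num)
        _ = (3 * Real.sqrt 2 ^ p) ^ (0.45:ℝ) * (R ^ (p+1)) ^ (0.45:ℝ) :=
            Real.mul_rpow (by positivity) (by positivity)
    have hs01 : s ^ (0.1:ℝ) ≤ 2 * R ^ (0.1:ℝ) := by
      have h1 : s ^ (0.1:ℝ) ≤ ((3:ℝ)*R) ^ (0.1:ℝ) := Real.rpow_le_rpow hs0.le hs3R (by norm_num)
      have h2 : ((3:ℝ)*R) ^ (0.1:ℝ) = (3:ℝ) ^ (0.1:ℝ) * R ^ (0.1:ℝ) :=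
        Real.mul_rpow (by norm_num) hR0.le
      have h3 : (3:ℝ) ^ (0.1:ℝ) ≤ 2 := by
        have h4 : (3:ℝ) ^ (0.1:ℝ) ≤ (3:ℝ) ^ ((1:ℝ)/2) :=
          Real.rpow_le_rpow_of_exponent_le (by norm_num) (by norm_num)
        have h5 : (3:ℝ) ^ ((1:ℝ)/2) = Real.sqrt 3 := by
          rw [Real.sqrt_eq_rpow]
        have h6 : Real.sqrt 3 ≤ 2 := by
          have := Real.sqrt_le_sqrt (show (3:ℝ) ≤ 4 by norm_num)
          rwa [show (4:ℝ) = 2^2 by norm_num, Real.sqrt_sq (by norm_num : (0:ℝ) ≤ 2)] at this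
        linarith
      calc s ^ (0.1:ℝ) ≤ (3:ℝ) ^ (0.1:ℝ) * R ^ (0.1:ℝ) := by rw [← h2]; exact h1
        _ ≤ 2 * R ^ (0.1:ℝ) :=
            mul_le_mul_of_nonneg_right h3 (Real.rpow_nonneg hR0.le _)
    have hcore : 6 * q^3 * Real.log (2*R)^2 * δ ^ (0.45:ℝ) * s ^ (0.1:ℝ)
        ≤ (R ^ p) ^ (0.9:ℝ) * R := by
      have hmm := mul_le_mul hδ45 hs01 (Real.rpow_nonneg hs0.le _) (by positivity)
      calc 6 * q^3 * Real.log (2*R)^2 * δ ^ (0.45:ℝ) * s ^ (0.1:ℝ)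
          = 6 * q^3 * Real.log (2*R)^2 * (δ ^ (0.45:ℝ) * s ^ (0.1:ℝ)) := by ring
        _ ≤ 6 * q^3 * Real.log (2*R)^2 *
            ((3 * Real.sqrt 2 ^ p) ^ (0.45:ℝ) * (R ^ (p+1)) ^ (0.45:ℝ) * (2 * R ^ (0.1:ℝ))) :=
            mul_le_mul_of_nonneg_left hmm (by positivity)
        _ = (12 * q ^ 3 * (3 * Real.sqrt 2 ^ p) ^ (0.45:ℝ) * Real.log (2 * R) ^ 2) *
            ((R ^ (p+1)) ^ (0.45:ℝ) * R ^ (0.1:ℝ)) := by ring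
        _ ≤ R ^ (0.45:ℝ) * ((R ^ (p+1)) ^ (0.45:ℝ) * R ^ (0.1:ℝ)) :=
            mul_le_mul_of_nonneg_right hA₁ (by positivity)
        _ = R ^ ((0.45:ℝ) + (p+1) * (0.45:ℝ) + (0.1:ℝ)) := by
            rw [← Real.rpow_mul hR0.le, ← Real.rpow_add hR0, ← Real.rpow_add hR0]
            ring_nf
        _ ≤ R ^ (p * (0.9:ℝ) + 1) :=
            Real.rpow_le_rpow_of_exponent_le hR (by nlinarith)
        _ = (R ^ p) ^ (0.9:ℝ) * R := by
            rw [Real.rpow_add hR0, Real.rpow_one, ← Real.rpow_mul hR0.le]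
    have hss : s ^ (0.9:ℝ) * s ^ (0.1:ℝ) = s := by
      rw [← Real.rpow_add hs0]; norm_num
    have hD0 : (0:ℝ) < R * (2 * δ ^ (0.45:ℝ)) := by positivity
    have e1 : 3 * q ^ 3 * Real.log (2 * R) ^ 2 * (s / R)
        = (3 * q ^ 3 * Real.log (2*R) ^ 2 * s * (2 * δ ^ (0.45:ℝ))) / (R * (2 * δ ^ (0.45:ℝ))) := by
      field_simp
    have e2 : 1 / 2 * u ^ (0.9:ℝ)
        = ((R ^ p) ^ (0.9:ℝ) * R * s ^ (0.9:ℝ)) / (R * (2 * δ ^ (0.45:ℝ))) := by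
      rw [hu9]
      field_simp
    rw [e1, e2]
    have eA : 6 * q^3 * Real.log (2*R)^2 * δ ^ (0.45:ℝ) * s ^ (0.1:ℝ) * s ^ (0.9:ℝ)
        = 3 * q ^ 3 * Real.log (2*R) ^ 2 * s * (2 * δ ^ (0.45:ℝ)) := by
      rw [show 6 * q^3 * Real.log (2*R)^2 * δ ^ (0.45:ℝ) * s ^ (0.1:ℝ) * s ^ (0.9:ℝ)
          = 3 * q^3 * Real.log (2*R)^2 * (s ^ (0.9:ℝ) * s ^ (0.1:ℝ)) * (2 * δ ^ (0.45:ℝ)) by ring,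
        hss]
    have hfin : 3 * q ^ 3 * Real.log (2*R) ^ 2 * s * (2 * δ ^ (0.45:ℝ))
        ≤ (R ^ p) ^ (0.9:ℝ) * R * s ^ (0.9:ℝ) := by
      rw [← eA]
      calc 6 * q^3 * Real.log (2*R)^2 * δ ^ (0.45:ℝ) * s ^ (0.1:ℝ) * s ^ (0.9:ℝ)
          ≤ ((R ^ p) ^ (0.9:ℝ) * R) * s ^ (0.9:ℝ) :=
            mul_le_mul_of_nonneg_right hcore (Real.rpow_nonneg hs0.le _)
        _ = (R ^ p) ^ (0.9:ℝ) * R * s ^ (0.9:ℝ) := by ring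
    gcongr
  · -- case (ii): 2R < N
    push_neg at hcase
    have hsN : N / 2 ≤ s := by linarith
    have hRp1 : (1:ℝ) ≤ R ^ p := Real.one_le_rpow hR hp.le
    have hu2 : δ ^ (-(1:ℝ)/2) * (N / 2) ≤ u := by
      rw [hu, mul_assoc]
      apply mul_le_mul_of_nonneg_left _ (by positivity)
      calc N / 2 = 1 * (N / 2) := by ring
        _ ≤ R ^ p * s := mul_le_mul hRp1 hsN (by positivity) (by positivity)
    have huu : Real.sqrt 2 ^ (-p) / 2 * N ≤ u ^ 2 := by
      have h2 := mul_le_mul hu0le hu2 (by positivity) hu0.le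
      calc Real.sqrt 2 ^ (-p) / 2 * N
          = (δ ^ ((1:ℝ)/2) * δ ^ (-(1:ℝ)/2)) * (Real.sqrt 2 ^ (-p) / 2 * N) := by
            rw [← Real.rpow_add hδ0]; norm_num
        _ = δ ^ ((1:ℝ)/2) * Real.sqrt 2 ^ (-p) * (δ ^ (-(1:ℝ)/2) * (N / 2)) := by ring
        _ ≤ u * u := h2
        _ = u ^ 2 := by ring
    have h09 : (Real.sqrt 2 ^ (-p) / 2 * N) ^ (0.45:ℝ) ≤ u ^ (0.9:ℝ) := by
      have e1 : u ^ (0.9:ℝ) = (u ^ 2) ^ (0.45:ℝ) := by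
        rw [← Real.rpow_natCast u 2, ← Real.rpow_mul hu0.le]; norm_num
      rw [e1]
      exact Real.rpow_le_rpow (by positivity) huu (by norm_num)
    by_cases hNX : X₂ ≤ N
    · have h1 := hX₂' N hNX
      have h2 : (Real.sqrt 2 ^ (-p) / 2) ^ (0.45:ℝ) * N ^ (0.45:ℝ)
          = (Real.sqrt 2 ^ (-p) / 2 * N) ^ (0.45:ℝ) :=
        (Real.mul_rpow (by positivity) hN0.le).symm
      have h3 : q ^ 3 * Real.log N ^ 3 ≤ 1/2 * u ^ (0.9:ℝ) := by
        calc q ^ 3 * Real.log N ^ 3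
            ≤ 1 / 2 * ((Real.sqrt 2 ^ (-p) / 2) ^ (0.45:ℝ) * N ^ (0.45:ℝ)) := by
              rw [← mul_assoc]; exact h1
          _ = 1 / 2 * (Real.sqrt 2 ^ (-p) / 2 * N) ^ (0.45:ℝ) := by rw [h2]
          _ ≤ 1 / 2 * u ^ (0.9:ℝ) := by linarith [h09]
      nlinarith [mul_nonneg (by positivity : (0:ℝ) ≤ q ^ 3) (pow_nonneg hlogR0 3)]
    · push_neg at hNX
      have h1 : Real.log N ≤ Real.log X₂ := Real.log_le_log hN0 hNX.le
      have h2 : q ^ 3 * Real.log N ^ 3 ≤ q ^ 3 * Real.log X₂ ^ 3 :=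
        mul_le_mul_of_nonneg_left (pow_le_pow_left₀ hlogN0 h1 3) (by positivity)
      have h3 : (δ ^ ((1:ℝ)/2) * Real.sqrt 2 ^ (-p)) ^ (0.9:ℝ) ≤ u ^ (0.9:ℝ) :=
        Real.rpow_le_rpow (by positivity) hu0le (by norm_num)
      nlinarith [mul_nonneg (by positivity : (0:ℝ) ≤ q ^ 3) (pow_nonneg hlogR0 3)]

end Aux

set_option maxHeartbeats 2000000 in
theorem bump_offdiagonal_sum_small (d : ℕ) (p Cρ : ℝ) (hp : 0 < p) (hCρ : 0 < Cρ) :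
    ∃ δ₀ > (0 : ℝ), ∀ δ : ℝ, δ₀ ≤ δ →
      ∀ A : Set (EuclideanSpace ℝ (Fin d)),
        (A.Pairwise fun a b =>
          Disjoint (ball a (δ * jb a ^ (-p))) (ball b (δ * jb b ^ (-p)))) →
        (∀ a ∈ A, 1 ≤ ‖a‖) →
        ∀ ρ : SchwartzMap (EuclideanSpace ℝ (Fin d)) ℂ, ρ 0 = 1 →
        (∀ x, ‖ρ x‖ ≤ Cρ * Real.exp (-(‖x‖ ^ (0.9 : ℝ)))) →
        ∀ a₀ ∈ A,
          (∑' a : ↥(A \ {a₀}),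
            ‖ρ ((δ ^ (-(1 : ℝ) / 2) * ‖a₀‖ ^ p) •
              ((a : EuclideanSpace ℝ (Fin d)) - a₀))‖ *
              wQE (‖(a : EuclideanSpace ℝ (Fin d))‖ ^ Real.sqrt p)) ≤
          (1 / 4) * wQE (‖a₀‖ ^ Real.sqrt p) := by
  classical
  have hs2pos : (0:ℝ) < Real.sqrt 2 := Real.sqrt_pos.mpr (by norm_num)
  set q : ℝ := Real.sqrt p with hq
  have hq0 : 0 < q := Real.sqrt_pos.mpr hp
  set C₃ : ℝ := (2 * Real.sqrt 2) ^ p * (Real.sqrt 2 ^ p) ^ p with hC₃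
  have hC₃0 : 0 < C₃ := by positivity
  set Cc : ℝ := (1 + C₃) ^ d with hCcdef
  have hCc1 : 1 ≤ Cc := one_le_pow₀ (by linarith)
  set K : ℝ := (2*p+1) * d with hKdef
  have hK0 : 0 ≤ K := by positivity
  -- X₁
  have hevX₁ : ∀ᶠ x:ℝ in atTop,
      12 * q ^ 3 * (3 * Real.sqrt 2 ^ p) ^ (0.45:ℝ) * Real.log (2 * x) ^ 2 ≤ x ^ (0.45:ℝ) := by
    have ha₁ : (0:ℝ) ≤ 12 * q ^ 3 * (3 * Real.sqrt 2 ^ p) ^ (0.45:ℝ) := by positivity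
    filter_upwards [ev_log_pow_le (4 * (12 * q ^ 3 * (3 * Real.sqrt 2 ^ p) ^ (0.45:ℝ)))
      (show (0:ℝ) < 0.45 by norm_num) 2 (by norm_num), eventually_ge_atTop (2:ℝ)] with x h1 h2
    have hx1 : (1:ℝ) ≤ x := by linarith
    have hlog : Real.log (2*x) ≤ 2 * Real.log x := by
      have h3 : (2:ℝ)*x ≤ x^2 := by nlinarith
      have h4 := Real.log_le_log (by positivity) h3
      rwa [Real.log_pow, Nat.cast_ofNat] at h4
    have hl0 : 0 ≤ Real.log (2*x) := Real.log_nonneg (by linarith)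
    have h5 : Real.log (2*x)^2 ≤ 4 * Real.log x ^ 2 := by nlinarith
    have h6 := mul_le_mul_of_nonneg_left h5 ha₁
    linarith
  obtain ⟨X₁, hX₁⟩ := eventually_atTop.mp hevX₁
  -- X₂
  have hc₄ : (0:ℝ) < (Real.sqrt 2 ^ (-p) / 2) ^ (0.45:ℝ) := by positivity
  have hevX₂ : ∀ᶠ x:ℝ in atTop, q ^ 3 * Real.log x ^ 3
      ≤ 1 / 2 * (Real.sqrt 2 ^ (-p) / 2) ^ (0.45:ℝ) * x ^ (0.45:ℝ) := by
    filter_upwards [ev_log_pow_le (q^3 * (2 / (Real.sqrt 2 ^ (-p) / 2) ^ (0.45:ℝ)))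
      (show (0:ℝ) < 0.45 by norm_num) 3 (by norm_num)] with x h1
    have h2 := mul_le_mul_of_nonneg_left h1 (le_of_lt (by positivity :
      (0:ℝ) < (Real.sqrt 2 ^ (-p) / 2) ^ (0.45:ℝ) / 2))
    have e : (Real.sqrt 2 ^ (-p) / 2) ^ (0.45:ℝ) / 2 *
        (q^3 * (2 / (Real.sqrt 2 ^ (-p) / 2) ^ (0.45:ℝ))) = q ^ 3 := by
      field_simp
    calc q ^ 3 * Real.log x ^ 3
        = (Real.sqrt 2 ^ (-p) / 2) ^ (0.45:ℝ) / 2 *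
          (q^3 * (2 / (Real.sqrt 2 ^ (-p) / 2) ^ (0.45:ℝ)) * Real.log x ^ 3) := by
          rw [← mul_assoc, e]
      _ ≤ (Real.sqrt 2 ^ (-p) / 2) ^ (0.45:ℝ) / 2 * x ^ (0.45:ℝ) := by
          linarith [h2]
      _ = 1 / 2 * (Real.sqrt 2 ^ (-p) / 2) ^ (0.45:ℝ) * x ^ (0.45:ℝ) := by ring
  obtain ⟨X₂', hX₂'⟩ := eventually_atTop.mp hevX₂
  set X₂ : ℝ := max X₂' 1 with hX₂def
  have hX₂1 : 1 ≤ X₂ := le_max_right _ _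
  have hX₂ : ∀ x ≥ X₂, q ^ 3 * Real.log x ^ 3
      ≤ 1 / 2 * (Real.sqrt 2 ^ (-p) / 2) ^ (0.45:ℝ) * x ^ (0.45:ℝ) :=
    fun x hx => hX₂' x (le_trans (le_max_left _ _) hx)
  -- tail
  set g : ℕ → ℝ := fun n => Cc * ((n:ℝ) + 1) ^ K * Real.exp (-(1/2) * (n:ℝ) ^ (0.9:ℝ)) with hgdef
  have hgsum : Summable g := summable_shell Cc K hCc1 hK0
  have hg0 : ∀ n, 0 ≤ g n := fun n => by rw [hgdef]; positivity
  have htail : Tendsto (fun i => ∑' k, g (k + i)) atTop (nhds 0) := tendsto_sum_nat_add g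
  have hq4 : (0:ℝ) < 1/(4*Cρ) := by positivity
  obtain ⟨n₁, hn₁⟩ := eventually_atTop.mp ((htail.eventually (gt_mem_nhds hq4)).mono
    (fun i h => le_of_lt h))
  -- δ conditions
  have hu₀tend : Tendsto (fun δ:ℝ => δ ^ ((1:ℝ)/2) * Real.sqrt 2 ^ (-p)) atTop atTop :=
    (tendsto_rpow_atTop (by norm_num)).atTop_mul_const (by positivity)
  have hRmintend : Tendsto (fun δ:ℝ => (δ * Real.sqrt 2 ^ (-p) / 3) ^ (1/(p+1))) atTop atTop :=
    (tendsto_rpow_atTop (by positivity)).comp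
      ((tendsto_id.atTop_mul_const (by positivity)).atTop_div_const (by norm_num))
  have hpowtend : Tendsto (fun δ:ℝ => (δ ^ ((1:ℝ)/2) * Real.sqrt 2 ^ (-p)) ^ (0.9:ℝ))
      atTop atTop := (tendsto_rpow_atTop (by norm_num)).comp hu₀tend
  have hδev : ∀ᶠ δ:ℝ in atTop, (1 ≤ δ)
      ∧ 1 ≤ δ ^ ((1:ℝ)/2) * Real.sqrt 2 ^ (-p)
      ∧ (n₁:ℝ) ≤ δ ^ ((1:ℝ)/2) * Real.sqrt 2 ^ (-p)
      ∧ q ^ 3 * Real.log X₂ ^ 3 ≤ 1/2 * (δ ^ ((1:ℝ)/2) * Real.sqrt 2 ^ (-p)) ^ (0.9:ℝ)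
      ∧ X₁ ≤ (δ * Real.sqrt 2 ^ (-p) / 3) ^ (1/(p+1)) := by
    filter_upwards [eventually_ge_atTop (1:ℝ), hu₀tend.eventually_ge_atTop 1,
      hu₀tend.eventually_ge_atTop (n₁:ℝ),
      hpowtend.eventually_ge_atTop (2 * (q ^ 3 * Real.log X₂ ^ 3)),
      hRmintend.eventually_ge_atTop X₁] with δ h1 h2 h3 h4 h5
    refine ⟨h1, h2, h3, ?_, h5⟩
    have h4' : 2 * (q ^ 3 * Real.log X₂ ^ 3) ≤ (δ ^ ((1:ℝ)/2) * Real.sqrt 2 ^ (-p)) ^ (0.9:ℝ) := h4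
    linarith
  obtain ⟨δ₀', hδ₀'⟩ := eventually_atTop.mp hδev
  refine ⟨max δ₀' 1, lt_of_lt_of_le one_pos (le_max_right _ _), ?_⟩
  intro δ hδle A hsep hA1 ρ hρ0 hρdec a₀ ha₀
  obtain ⟨hδ1, hu₀1, hu₀n₁, hG2', hG1'⟩ := hδ₀' δ (le_trans (le_max_left _ _) hδle)
  have hδ0 : (0:ℝ) < δ := lt_of_lt_of_le one_pos hδ1
  set R : ℝ := ‖a₀‖ with hRdef
  have hR1 : 1 ≤ R := hA1 a₀ ha₀
  have hR0 : (0:ℝ) < R := lt_of_lt_of_le one_pos hR1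
  set m : ℝ := δ ^ (-(1:ℝ)/2) * R ^ p with hm
  have hm0 : 0 < m := by positivity
  set u₀ : ℝ := δ ^ ((1:ℝ)/2) * Real.sqrt 2 ^ (-p) with hu₀def
  set n₀ : ℕ := ⌊u₀⌋₊ with hn₀def
  have hn₁n₀ : n₁ ≤ n₀ := Nat.le_floor hu₀n₁
  have hjb0 : ∀ x : EuclideanSpace ℝ (Fin d), 0 < jb x :=
    fun x => Real.sqrt_pos.mpr (by positivity)
  have hjble : ∀ x : EuclideanSpace ℝ (Fin d), 1 ≤ ‖x‖ →
      Real.sqrt 2 ^ (-p) * ‖x‖ ^ (-p) ≤ jb x ^ (-p) := by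
    intro x hx
    have h1 : jb x ≤ Real.sqrt 2 * ‖x‖ := by
      show Real.sqrt (1 + ‖x‖^2) ≤ _
      calc Real.sqrt (1 + ‖x‖^2) ≤ Real.sqrt (2 * ‖x‖^2) := Real.sqrt_le_sqrt (by nlinarith)
        _ = Real.sqrt 2 * ‖x‖ := by
            rw [Real.sqrt_mul (by norm_num), Real.sqrt_sq (norm_nonneg _)]
    have h2 : (Real.sqrt 2 * ‖x‖) ^ (-p) ≤ jb x ^ (-p) :=
      Real.rpow_le_rpow_of_nonpos (hjb0 x) h1 (by linarith)
    rwa [Real.mul_rpow hs2pos.le (norm_nonneg x)] at h2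
  have hsepdist : ∀ a ∈ A, a ≠ a₀ →
      δ * jb a ^ (-p) + δ * jb a₀ ^ (-p) ≤ ‖a - a₀‖ := by
    intro a ha hne
    have h := hsep ha ha₀ hne
    have h1 := (disjoint_ball_ball_iff (by have := hjb0 a; positivity)
      (by have := hjb0 a₀; positivity)).mp h
    rwa [dist_eq_norm] at h1
  -- key separation lower bound for points of A \ {a₀}
  have hslow : ∀ a : ↥(A \ {a₀}),
      δ * (Real.sqrt 2 ^ (-p) * R ^ (-p)) ≤ ‖(a : EuclideanSpace ℝ (Fin d)) - a₀‖ := by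
    intro a
    have haA : (a : EuclideanSpace ℝ (Fin d)) ∈ A := a.2.1
    have hane : (a : EuclideanSpace ℝ (Fin d)) ≠ a₀ := by
      have := a.2.2; simpa using this
    have h1 := hsepdist a haA hane
    have h2 : δ * (Real.sqrt 2 ^ (-p) * R ^ (-p)) ≤ δ * jb a₀ ^ (-p) :=
      mul_le_mul_of_nonneg_left (hjble a₀ hR1) hδ0.le
    have h3 : (0:ℝ) ≤ δ * jb (a : EuclideanSpace ℝ (Fin d)) ^ (-p) := by
      have := hjb0 (a : EuclideanSpace ℝ (Fin d)); positivity
    linarith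
  have hu₀le : ∀ a : ↥(A \ {a₀}),
      u₀ ≤ m * ‖(a : EuclideanSpace ℝ (Fin d)) - a₀‖ := by
    intro a
    calc u₀ = m * (δ * (Real.sqrt 2 ^ (-p) * R ^ (-p))) := by
          rw [hm, hu₀def, show δ ^ (-(1:ℝ)/2) * R ^ p * (δ * (Real.sqrt 2 ^ (-p) * R ^ (-p)))
              = (δ ^ (-(1:ℝ)/2) * δ) * (R ^ p * R ^ (-p)) * Real.sqrt 2 ^ (-p) by ring,
            ← Real.rpow_add hR0, ← Real.rpow_add_one hδ0.ne' (-(1:ℝ)/2)]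
          norm_num
      _ ≤ m * ‖(a : EuclideanSpace ℝ (Fin d)) - a₀‖ :=
          mul_le_mul_of_nonneg_left (hslow a) hm0.le
  have hu₀0 : 0 < u₀ := by rw [hu₀def]; positivity
  have hwpos : ∀ t : ℝ, 0 < wQE t := fun t => Real.exp_pos _
  -- reduce to finite sums
  apply tsum_le_of_sum_le' (le_of_lt (mul_pos (by norm_num : (0:ℝ) < 1/4) (hwpos _)))
  intro F
  -- weight formula
  have hwfun : ∀ N : ℝ, 1 ≤ N → wQE (N ^ q) = Real.exp (q ^ 3 * Real.log N ^ 3) := by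
    intro N hN
    show Real.exp (Real.log (N ^ q) ^ 3) = _
    rw [Real.log_rpow (lt_of_lt_of_le one_pos hN)]
    congr 1
    ring
  have hspos : ∀ a : ↥(A \ {a₀}), 0 < ‖(a : EuclideanSpace ℝ (Fin d)) - a₀‖ := by
    intro a
    have h0 : (0:ℝ) < δ * (Real.sqrt 2 ^ (-p) * R ^ (-p)) := by positivity
    exact lt_of_lt_of_le h0 (hslow a)
  -- per-term bound
  have hterm : ∀ a : ↥(A \ {a₀}),
      ‖ρ (m • ((a : EuclideanSpace ℝ (Fin d)) - a₀))‖ *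
        wQE (‖(a : EuclideanSpace ℝ (Fin d))‖ ^ q)
      ≤ Cρ * Real.exp (-(1/2) * (m * ‖(a : EuclideanSpace ℝ (Fin d)) - a₀‖) ^ (0.9:ℝ)) *
        wQE (R ^ q) := by
    intro a
    have hN1 : 1 ≤ ‖(a : EuclideanSpace ℝ (Fin d))‖ := hA1 _ a.2.1
    have htri : ‖(a : EuclideanSpace ℝ (Fin d))‖ ≤ R + ‖(a : EuclideanSpace ℝ (Fin d)) - a₀‖ := by
      calc ‖(a : EuclideanSpace ℝ (Fin d))‖
          = ‖((a : EuclideanSpace ℝ (Fin d)) - a₀) + a₀‖ := by rw [sub_add_cancel]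
        _ ≤ ‖(a : EuclideanSpace ℝ (Fin d)) - a₀‖ + R := norm_add_le _ _
        _ = R + ‖(a : EuclideanSpace ℝ (Fin d)) - a₀‖ := by ring
    have htri2 : ‖(a : EuclideanSpace ℝ (Fin d)) - a₀‖
        ≤ ‖(a : EuclideanSpace ℝ (Fin d))‖ + R := norm_sub_le _ _
    have hstar := star_bound p q δ R ‖(a : EuclideanSpace ℝ (Fin d))‖
      ‖(a : EuclideanSpace ℝ (Fin d)) - a₀‖
      (m * ‖(a : EuclideanSpace ℝ (Fin d)) - a₀‖) X₁ X₂ hp hq0 hδ1 hR1 hN1 (hslow a)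
      htri htri2 hX₁ hX₂1 hX₂ hG1' hG2' (by rw [hm])
    have hnorm : ‖m • ((a : EuclideanSpace ℝ (Fin d)) - a₀)‖
        = m * ‖(a : EuclideanSpace ℝ (Fin d)) - a₀‖ := by
      rw [norm_smul, Real.norm_eq_abs, abs_of_pos hm0]
    calc ‖ρ (m • ((a : EuclideanSpace ℝ (Fin d)) - a₀))‖ *
          wQE (‖(a : EuclideanSpace ℝ (Fin d))‖ ^ q)
        ≤ (Cρ * Real.exp (-((m * ‖(a : EuclideanSpace ℝ (Fin d)) - a₀‖) ^ (0.9:ℝ)))) *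
          Real.exp (q ^ 3 * Real.log ‖(a : EuclideanSpace ℝ (Fin d))‖ ^ 3) := by
          rw [hwfun _ hN1]
          apply mul_le_mul_of_nonneg_right _ (Real.exp_pos _).le
          have h5 := hρdec (m • ((a : EuclideanSpace ℝ (Fin d)) - a₀))
          rwa [hnorm] at h5
      _ = Cρ * Real.exp (-((m * ‖(a : EuclideanSpace ℝ (Fin d)) - a₀‖) ^ (0.9:ℝ))
            + q ^ 3 * Real.log ‖(a : EuclideanSpace ℝ (Fin d))‖ ^ 3) := by
          rw [Real.exp_add]; ring
      _ ≤ Cρ * Real.exp (-(1/2) * (m * ‖(a : EuclideanSpace ℝ (Fin d)) - a₀‖) ^ (0.9:ℝ)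
            + q ^ 3 * Real.log R ^ 3) := by
          apply mul_le_mul_of_nonneg_left _ hCρ.le
          apply Real.exp_le_exp.mpr
          linarith [hstar]
      _ = Cρ * Real.exp (-(1/2) * (m * ‖(a : EuclideanSpace ℝ (Fin d)) - a₀‖) ^ (0.9:ℝ)) *
            wQE (R ^ q) := by
          rw [hwfun R hR1, Real.exp_add]; ring
  -- the shell map
  set φ : ↥(A \ {a₀}) → ℕ := fun a => ⌊m * ‖(a : EuclideanSpace ℝ (Fin d)) - a₀‖⌋₊ with hφdef
  have hφge : ∀ a : ↥(A \ {a₀}), n₀ ≤ φ a := fun a => Nat.floor_le_floor (hu₀le a)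
  -- the cardinality bound for shells
  have hcard : ∀ n : ℕ, n₀ ≤ n →
      (((F.filter (fun a => φ a = n)).card : ℝ)) ≤ Cc * ((n:ℝ) + 1) ^ K := by
    intro n hn
    set U : ℝ := (n:ℝ) + 1 with hUdef
    have hU1 : 1 ≤ U := by
      rw [hUdef]
      have : (0:ℝ) ≤ (n:ℝ) := Nat.cast_nonneg n
      linarith
    have hU0 : 0 < U := lt_of_lt_of_le one_pos hU1
    have hu₀U : u₀ ≤ U := by
      have h1 : u₀ < (n₀:ℝ) + 1 := Nat.lt_floor_add_one u₀
      have h2 : ((n₀:ℝ) + 1) ≤ (n:ℝ) + 1 := by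
        have : (n₀:ℝ) ≤ (n:ℝ) := by exact_mod_cast hn
        linarith
      rw [hUdef]; linarith
    set t : ℝ := δ ^ ((1:ℝ)/2) * R ^ (-p) * U with htdef
    have ht0 : 0 < t := by positivity
    set r : ℝ := δ * (Real.sqrt 2 * (R + t)) ^ (-p) with hrdef
    have hRt0 : (0:ℝ) < Real.sqrt 2 * (R + t) := by positivity
    have hr0 : 0 < r := by positivity
    have hmt : m * t = U := by
      rw [hm, htdef, show δ ^ (-(1:ℝ)/2) * R ^ p * (δ ^ ((1:ℝ)/2) * R ^ (-p) * U)
          = (δ ^ (-(1:ℝ)/2) * δ ^ ((1:ℝ)/2)) * (R ^ p * R ^ (-p)) * U by ring,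
        ← Real.rpow_add hδ0, ← Real.rpow_add hR0]
      norm_num
    set G : Finset (EuclideanSpace ℝ (Fin d)) :=
      (F.filter (fun a => φ a = n)).image Subtype.val with hGdef
    have hGcard : G.card = (F.filter (fun a => φ a = n)).card :=
      Finset.card_image_of_injective _ Subtype.val_injective
    have hGmem : ∀ x ∈ G, x ∈ A ∧ x ≠ a₀ ∧ ‖x - a₀‖ ≤ t := by
      intro x hx
      obtain ⟨a, ha, rfl⟩ := Finset.mem_image.mp hx
      have hfil : φ a = n := (Finset.mem_filter.mp ha).2
      refine ⟨a.2.1, by have := a.2.2; simpa using this, ?_⟩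
      have h1 : m * ‖(a : EuclideanSpace ℝ (Fin d)) - a₀‖ < U := by
        rw [hUdef, ← hfil]
        exact Nat.lt_floor_add_one _
      rw [← hmt] at h1
      exact le_of_lt ((mul_lt_mul_iff_right₀ hm0).mp h1)
    have hsub : ∀ x ∈ G, ball x r ⊆ ball x (δ * jb x ^ (-p)) := by
      intro x hx
      apply ball_subset_ball
      obtain ⟨hxA, hxne, hxt⟩ := hGmem x hx
      have hx1 : 1 ≤ ‖x‖ := hA1 x hxA
      have hxRt : ‖x‖ ≤ R + t := by
        calc ‖x‖ = ‖(x - a₀) + a₀‖ := by rw [sub_add_cancel]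
          _ ≤ ‖x - a₀‖ + R := norm_add_le _ _
          _ ≤ R + t := by linarith
      have hjbx : jb x ≤ Real.sqrt 2 * (R + t) := by
        show Real.sqrt (1 + ‖x‖^2) ≤ _
        have h1 : 1 + ‖x‖^2 ≤ 2 * (R + t)^2 := by nlinarith [norm_nonneg x]
        calc Real.sqrt (1 + ‖x‖^2) ≤ Real.sqrt (2 * (R + t)^2) := Real.sqrt_le_sqrt h1
          _ = Real.sqrt 2 * (R + t) := by
              rw [Real.sqrt_mul (by norm_num), Real.sqrt_sq (by positivity)]
      rw [hrdef]
      exact mul_le_mul_of_nonneg_left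
        (Real.rpow_le_rpow_of_nonpos (hjb0 x) hjbx (by linarith)) hδ0.le
    have hpair : (G : Set (EuclideanSpace ℝ (Fin d))).Pairwise
        (fun a b => Disjoint (ball a r) (ball b r)) := by
      intro x hx y hy hxy
      have h := hsep (hGmem x (by exact_mod_cast hx)).1 (hGmem y (by exact_mod_cast hy)).1 hxy
      exact h.mono (hsub x (by exact_mod_cast hx)) (hsub y (by exact_mod_cast hy))
    have hvol := card_ball_bound G hr0 ht0.le a₀
      (fun x hx => by rw [dist_eq_norm]; exact (hGmem x hx).2.2) hpair
    -- t ≤ C₃ * U^(2p+1) * r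
    have hδh : δ ^ ((1:ℝ)/2) ≤ Real.sqrt 2 ^ p * U := by
      have h1 := mul_le_mul_of_nonneg_right hu₀U (Real.rpow_nonneg hs2pos.le p)
      calc δ ^ ((1:ℝ)/2) = δ ^ ((1:ℝ)/2) * Real.sqrt 2 ^ (-p) * Real.sqrt 2 ^ p := by
            rw [mul_assoc, ← Real.rpow_add hs2pos]; norm_num
        _ ≤ U * Real.sqrt 2 ^ p := h1
        _ = Real.sqrt 2 ^ p * U := mul_comm _ _
    have hδhp : (δ ^ ((1:ℝ)/2)) ^ p ≤ (Real.sqrt 2 ^ p) ^ p * U ^ p := by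
      calc (δ ^ ((1:ℝ)/2)) ^ p ≤ (Real.sqrt 2 ^ p * U) ^ p :=
            Real.rpow_le_rpow (by positivity) hδh hp.le
        _ = (Real.sqrt 2 ^ p) ^ p * U ^ p := Real.mul_rpow (by positivity) hU0.le
    have hδinv : δ ^ (-(1:ℝ)/2) ≤ 1 :=
      Real.rpow_le_one_of_one_le_of_nonpos hδ1 (by norm_num)
    have hRt2 : Real.sqrt 2 * (R + t) ≤ 2 * Real.sqrt 2 * (R * (δ ^ ((1:ℝ)/2) * U)) := by
      have hRp : R ^ (-p) ≤ 1 := Real.rpow_le_one_of_one_le_of_nonpos hR1 (by linarith)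
      have htle : t ≤ δ ^ ((1:ℝ)/2) * U := by
        rw [htdef]
        calc δ ^ ((1:ℝ)/2) * R ^ (-p) * U ≤ δ ^ ((1:ℝ)/2) * 1 * U := by
              apply mul_le_mul_of_nonneg_right _ hU0.le
              exact mul_le_mul_of_nonneg_left hRp (by positivity)
          _ = δ ^ ((1:ℝ)/2) * U := by ring
      have hδU1 : 1 ≤ δ ^ ((1:ℝ)/2) * U := by
        have h2 : 1 ≤ δ ^ ((1:ℝ)/2) := Real.one_le_rpow hδ1 (by norm_num)
        nlinarith
      have hRa : R ≤ R * (δ ^ ((1:ℝ)/2) * U) := le_mul_of_one_le_right hR0.le hδU1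
      have haa : δ ^ ((1:ℝ)/2) * U ≤ R * (δ ^ ((1:ℝ)/2) * U) :=
        le_mul_of_one_le_left (by positivity) hR1
      have h3 : R + t ≤ 2 * (R * (δ ^ ((1:ℝ)/2) * U)) := by linarith
      calc Real.sqrt 2 * (R + t) ≤ Real.sqrt 2 * (2 * (R * (δ ^ ((1:ℝ)/2) * U))) :=
            mul_le_mul_of_nonneg_left h3 hs2pos.le
        _ = 2 * Real.sqrt 2 * (R * (δ ^ ((1:ℝ)/2) * U)) := by ring
    have hrtp : (Real.sqrt 2 * (R + t)) ^ p
        ≤ (2 * Real.sqrt 2) ^ p * (R ^ p * ((δ ^ ((1:ℝ)/2)) ^ p * U ^ p)) := by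
      calc (Real.sqrt 2 * (R + t)) ^ p
          ≤ (2 * Real.sqrt 2 * (R * (δ ^ ((1:ℝ)/2) * U))) ^ p :=
            Real.rpow_le_rpow (by positivity) hRt2 hp.le
        _ = (2 * Real.sqrt 2) ^ p * (R * (δ ^ ((1:ℝ)/2) * U)) ^ p :=
            Real.mul_rpow (by positivity) (by positivity)
        _ = (2 * Real.sqrt 2) ^ p * (R ^ p * (δ ^ ((1:ℝ)/2) * U) ^ p) := by
            rw [Real.mul_rpow hR0.le (by positivity)]
        _ = (2 * Real.sqrt 2) ^ p * (R ^ p * ((δ ^ ((1:ℝ)/2)) ^ p * U ^ p)) := by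
            rw [Real.mul_rpow (by positivity) hU0.le]
    have hUmerge : U ^ p * U ^ p * U = U ^ (2*p+1) := by
      rw [← Real.rpow_add hU0, ← Real.rpow_add_one hU0.ne']
      ring_nf
    have ha : δ ^ ((1:ℝ)/2) * (δ ^ ((1:ℝ)/2)) ^ p
        ≤ δ * ((Real.sqrt 2 ^ p) ^ p * U ^ p) := by
      have e1 : δ ^ ((1:ℝ)/2) * (δ ^ ((1:ℝ)/2)) ^ p
          = δ * (δ ^ (-(1:ℝ)/2) * (δ ^ ((1:ℝ)/2)) ^ p) := by
        rw [show δ * (δ ^ (-(1:ℝ)/2) * (δ ^ ((1:ℝ)/2)) ^ p)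
            = (δ ^ (-(1:ℝ)/2) * δ) * (δ ^ ((1:ℝ)/2)) ^ p by ring,
          ← Real.rpow_add_one hδ0.ne' (-(1:ℝ)/2)]
        norm_num
      rw [e1]
      apply mul_le_mul_of_nonneg_left _ hδ0.le
      calc δ ^ (-(1:ℝ)/2) * (δ ^ ((1:ℝ)/2)) ^ p
          ≤ 1 * (δ ^ ((1:ℝ)/2)) ^ p := mul_le_mul_of_nonneg_right hδinv (by positivity)
        _ = (δ ^ ((1:ℝ)/2)) ^ p := one_mul _
        _ ≤ (Real.sqrt 2 ^ p) ^ p * U ^ p := hδhp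
    have hkey2 : t * (Real.sqrt 2 * (R + t)) ^ p ≤ C₃ * U ^ (2*p+1) * δ := by
      have hRR : R ^ (-p) * R ^ p = 1 := by
        rw [← Real.rpow_add hR0]; norm_num
      calc t * (Real.sqrt 2 * (R + t)) ^ p
          ≤ t * ((2 * Real.sqrt 2) ^ p * (R ^ p * ((δ ^ ((1:ℝ)/2)) ^ p * U ^ p))) :=
            mul_le_mul_of_nonneg_left hrtp ht0.le
        _ = (2 * Real.sqrt 2) ^ p * ((R ^ (-p) * R ^ p) *
            ((δ ^ ((1:ℝ)/2) * (δ ^ ((1:ℝ)/2)) ^ p) * (U ^ p * U))) := by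
            rw [htdef]; ring
        _ = (2 * Real.sqrt 2) ^ p *
            ((δ ^ ((1:ℝ)/2) * (δ ^ ((1:ℝ)/2)) ^ p) * (U ^ p * U)) := by
            rw [hRR, one_mul]
        _ ≤ (2 * Real.sqrt 2) ^ p *
            ((δ * ((Real.sqrt 2 ^ p) ^ p * U ^ p)) * (U ^ p * U)) := by
            apply mul_le_mul_of_nonneg_left _ (by positivity)
            exact mul_le_mul_of_nonneg_right ha (by positivity)
        _ = ((2 * Real.sqrt 2) ^ p * (Real.sqrt 2 ^ p) ^ p) * (U ^ p * U ^ p * U) * δ := by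
            ring
        _ = C₃ * U ^ (2*p+1) * δ := by rw [hUmerge, hC₃]
    have htC : t ≤ C₃ * U ^ (2*p+1) * r := by
      have e : (Real.sqrt 2 * (R+t)) ^ p * (Real.sqrt 2 * (R+t)) ^ (-p) = 1 := by
        rw [← Real.rpow_add hRt0]; norm_num
      calc t = t * ((Real.sqrt 2 * (R+t)) ^ p * (Real.sqrt 2 * (R+t)) ^ (-p)) := by
            rw [e, mul_one]
        _ = (t * (Real.sqrt 2 * (R+t)) ^ p) * (Real.sqrt 2 * (R+t)) ^ (-p) := by ring
        _ ≤ (C₃ * U ^ (2*p+1) * δ) * (Real.sqrt 2 * (R+t)) ^ (-p) :=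
            mul_le_mul_of_nonneg_right hkey2 (Real.rpow_nonneg hRt0.le _)
        _ = C₃ * U ^ (2*p+1) * r := by rw [hrdef]; ring
    have hU2p1 : 1 ≤ U ^ (2*p+1) := Real.one_le_rpow hU1 (by linarith)
    have htr : t + r ≤ (1+C₃) * U ^ (2*p+1) * r := by
      have h1 : r ≤ U ^ (2*p+1) * r := le_mul_of_one_le_left hr0.le hU2p1
      have h2 : (1+C₃) * U ^ (2*p+1) * r = U ^ (2*p+1) * r + C₃ * U ^ (2*p+1) * r := by ring
      linarith [htC]
    have hcard2 : ((F.filter (fun a => φ a = n)).card : ℝ) ≤ ((1+C₃) * U ^ (2*p+1)) ^ d := by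
      have h1 : ((F.filter (fun a => φ a = n)).card : ℝ) * r ^ d
          ≤ ((1+C₃) * U ^ (2*p+1)) ^ d * r ^ d := by
        rw [← hGcard]
        calc (G.card : ℝ) * r ^ d ≤ (t+r) ^ d := hvol
          _ ≤ ((1+C₃) * U ^ (2*p+1) * r) ^ d := pow_le_pow_left₀ (by positivity) htr d
          _ = ((1+C₃) * U ^ (2*p+1)) ^ d * r ^ d := by rw [mul_pow]
      exact le_of_mul_le_mul_right h1 (pow_pos hr0 d)
    calc ((F.filter (fun a => φ a = n)).card : ℝ) ≤ ((1+C₃) * U ^ (2*p+1)) ^ d := hcard2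
      _ = Cc * U ^ K := by
          rw [mul_pow, hCcdef, hKdef, ← Real.rpow_natCast (U ^ (2*p+1)) d,
            ← Real.rpow_mul hU0.le]
  -- inner sum bound
  have hinner : ∑ a ∈ F, Real.exp (-(1/2) *
      (m * ‖(a : EuclideanSpace ℝ (Fin d)) - a₀‖) ^ (0.9:ℝ)) ≤ 1/(4*Cρ) := by
    have hstep1 : ∀ a ∈ F, Real.exp (-(1/2) *
        (m * ‖(a : EuclideanSpace ℝ (Fin d)) - a₀‖) ^ (0.9:ℝ))
        ≤ Real.exp (-(1/2) * ((φ a : ℝ)) ^ (0.9:ℝ)) := by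
      intro a _
      apply Real.exp_le_exp.mpr
      have h1 : ((φ a : ℝ)) ≤ m * ‖(a : EuclideanSpace ℝ (Fin d)) - a₀‖ :=
        Nat.floor_le (mul_nonneg hm0.le (norm_nonneg _))
      have h2 : ((φ a : ℝ)) ^ (0.9:ℝ)
          ≤ (m * ‖(a : EuclideanSpace ℝ (Fin d)) - a₀‖) ^ (0.9:ℝ) :=
        Real.rpow_le_rpow (Nat.cast_nonneg _) h1 (by norm_num)
      linarith
    calc ∑ a ∈ F, Real.exp (-(1/2) *
          (m * ‖(a : EuclideanSpace ℝ (Fin d)) - a₀‖) ^ (0.9:ℝ))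
        ≤ ∑ a ∈ F, Real.exp (-(1/2) * ((φ a : ℝ)) ^ (0.9:ℝ)) := Finset.sum_le_sum hstep1
      _ = ∑ n ∈ F.image φ, (F.filter (fun a => φ a = n)).card •
            Real.exp (-(1/2) * ((n:ℝ)) ^ (0.9:ℝ)) :=
          Finset.sum_comp (fun n : ℕ => Real.exp (-(1/2) * ((n:ℝ)) ^ (0.9:ℝ))) φ
      _ ≤ ∑ n ∈ F.image φ, g n := by
          apply Finset.sum_le_sum
          intro n hn
          obtain ⟨a, haF, hfa⟩ := Finset.mem_image.mp hn
          have hn₀n : n₀ ≤ n := hfa ▸ hφge a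
          rw [nsmul_eq_mul]
          calc ((F.filter (fun a => φ a = n)).card : ℝ) *
                Real.exp (-(1/2) * ((n:ℝ)) ^ (0.9:ℝ))
              ≤ (Cc * ((n:ℝ)+1) ^ K) * Real.exp (-(1/2) * ((n:ℝ)) ^ (0.9:ℝ)) :=
                mul_le_mul_of_nonneg_right (hcard n hn₀n) (Real.exp_pos _).le
            _ = g n := by simp only [hgdef]
      _ ≤ ∑' k, g (k + n₀) := by
          apply sum_le_tail g hgsum hg0 n₀
          intro n hn
          obtain ⟨a, haF, hfa⟩ := Finset.mem_image.mp hn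
          exact hfa ▸ hφge a
      _ ≤ 1/(4*Cρ) := hn₁ n₀ hn₁n₀
  -- final assembly
  calc ∑ a ∈ F, ‖ρ (m • ((a : EuclideanSpace ℝ (Fin d)) - a₀))‖ *
        wQE (‖(a : EuclideanSpace ℝ (Fin d))‖ ^ q)
      ≤ ∑ a ∈ F, Cρ * Real.exp (-(1/2) *
          (m * ‖(a : EuclideanSpace ℝ (Fin d)) - a₀‖) ^ (0.9:ℝ)) * wQE (R ^ q) :=
        Finset.sum_le_sum (fun a _ => hterm a)
    _ = Cρ * wQE (R ^ q) * ∑ a ∈ F, Real.exp (-(1/2) *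
          (m * ‖(a : EuclideanSpace ℝ (Fin d)) - a₀‖) ^ (0.9:ℝ)) := by
        rw [Finset.mul_sum]
        apply Finset.sum_congr rfl
        intro a _
        ring
    _ ≤ Cρ * wQE (R ^ q) * (1/(4*Cρ)) :=
        mul_le_mul_of_nonneg_left hinner (mul_nonneg hCρ.le (hwpos _).le)
    _ = 1/4 * wQE (R ^ q) := by
        field_simp
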